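/- Let L : ℝ^p → ℝ be convex and differentiable with K-Lipschitz gradient (i.e., ‖∇L(u) − ∇L(v)‖ ≤ K‖u − v‖ for all u, v), where K > 0, and let w* ∈ ℝ^p satisfy ∇L(w*) = 0. Let 0 < η ≤ 2/K, let w, Δ ∈ ℝ^p be arbitrary, and set A = Δ − ∇L(w). Then ‖(w − ηΔ) − w*‖² ≤ ‖w − w*‖² − (2η − Kη²)(L(w) − L(w*)) − 2η⟨w − η∇L(w) − w*, A⟩ + η²‖A‖². -/

import Mathlib

open RealInnerProductSpace

section aux

variable {p : ℕ}

local notation "E" => EuclideanSpace ℝ (Fin p)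

lemma aux_line_deriv (L : E → ℝ) (hdiff : Differentiable ℝ L) (u d : E) (t : ℝ) :
    HasDerivAt (fun s : ℝ => L (u + s • d)) ⟪gradient L (u + t • d), d⟫ t := by
  have hline : HasDerivAt (fun s : ℝ => u + s • d) d t := by
    simpa using ((hasDerivAt_id t).smul_const d).const_add u
  have hg := (hdiff (u + t • d)).hasGradientAt
  have := (hg.hasFDerivAt.comp_hasDerivAt t hline)
  simpa [InnerProductSpace.toDual_apply_apply, Function.comp_def] using this

/-- Descent lemma. -/
lemma aux_descent (K : ℝ) (hK : 0 < K) (L : E → ℝ) (hdiff : Differentiable ℝ L)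
    (hlip : ∀ u v : E, ‖gradient L u - gradient L v‖ ≤ K * ‖u - v‖) (u v : E) :
    L v ≤ L u + ⟪gradient L u, v - u⟫ + K / 2 * ‖v - u‖ ^ 2 := by
  set d := v - u with hd
  set c : ℝ := ⟪gradient L u, d⟫ with hc
  set h : ℝ → ℝ := fun t => L (u + t • d) - t * c - K * ‖d‖ ^ 2 / 2 * t ^ 2 with hh
  have hderiv : ∀ t : ℝ,
      HasDerivAt h (⟪gradient L (u + t • d), d⟫ - c - K * ‖d‖ ^ 2 * t) t := by
    intro t
    have h1 := aux_line_deriv L hdiff u d t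
    have h2 : HasDerivAt (fun t : ℝ => t * c) c t := hasDerivAt_mul_const c
    have h3 : HasDerivAt (fun t : ℝ => K * ‖d‖ ^ 2 / 2 * t ^ 2) (K * ‖d‖ ^ 2 * t) t := by
      have := (hasDerivAt_pow 2 t).const_mul (K * ‖d‖ ^ 2 / 2)
      convert this using 1
      · rfl
      · rfl
      · rw [show (2:ℕ) - 1 = 1 from rfl, pow_one]; push_cast; ring
    exact (h1.sub h2).sub h3
  have hanti : AntitoneOn h (Set.Icc 0 1) := by
    apply antitoneOn_of_deriv_nonpos (convex_Icc 0 1)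
    · exact Continuous.continuousOn (by
        have := hdiff.continuous
        simp only [hh]
        fun_prop)
    · intro t ht
      exact ((hderiv t).differentiableAt).differentiableWithinAt
    · intro t ht
      rw [interior_Icc] at ht
      rw [(hderiv t).deriv]
      have hb : ⟪gradient L (u + t • d) - gradient L u, d⟫ ≤ K * t * ‖d‖ ^ 2 := by
        calc ⟪gradient L (u + t • d) - gradient L u, d⟫
            ≤ ‖gradient L (u + t • d) - gradient L u‖ * ‖d‖ := real_inner_le_norm _ _
          _ ≤ (K * ‖(u + t • d) - u‖) * ‖d‖ := by
              gcongr; exact hlip _ _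
          _ = K * t * ‖d‖ ^ 2 := by
              have : (u + t • d) - u = t • d := by abel
              rw [this, norm_smul, Real.norm_eq_abs, abs_of_pos ht.1]
              ring
      have := inner_sub_left (𝕜 := ℝ) (gradient L (u + t • d)) (gradient L u) d
      rw [this] at hb
      nlinarith [ht.1, ht.2, sq_nonneg ‖d‖]
  have h01 := hanti (Set.left_mem_Icc.2 zero_le_one) (Set.right_mem_Icc.2 zero_le_one) zero_le_one
  simp only [hh] at h01
  have e1 : u + (1 : ℝ) • d = v := by simp [hd]
  have e0 : u + (0 : ℝ) • d = u := by simp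
  rw [e1, e0] at h01
  simp only [hc, hd] at h01 ⊢
  nlinarith [h01]

/-- First-order condition for convexity. -/
lemma aux_convex_lb (L : E → ℝ) (hconv : ConvexOn ℝ Set.univ L)
    (hdiff : Differentiable ℝ L) (u v : E) :
    L u + ⟪gradient L u, v - u⟫ ≤ L v := by
  rcases eq_or_ne v u with rfl | hne
  · simp
  set d := v - u with hd
  set φ : ℝ → ℝ := fun t => L (u + t • d) with hφ
  have hφconv : ConvexOn ℝ Set.univ φ := by
    have := hconv.comp_affineMap (AffineMap.lineMap u v)
    have heq : φ = L ∘ (AffineMap.lineMap u v) := by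
      funext t
      simp [hφ, AffineMap.lineMap_apply, hd, add_comm]
    rw [heq]
    simpa using this
  have hder : HasDerivAt φ ⟪gradient L (u + (0:ℝ) • d), d⟫ 0 :=
    aux_line_deriv L hdiff u d 0
  have := hφconv.le_slope_of_hasDerivAt (Set.mem_univ (0:ℝ)) (Set.mem_univ (1:ℝ))
    zero_lt_one hder
  rw [slope_def_field] at this
  simp only [hφ, zero_smul, add_zero, one_smul] at this hder ⊢
  have e1 : u + d = v := by simp [hd]
  rw [e1] at this
  have : ⟪gradient L u, d⟫ ≤ (L v - L u) / (1 - 0) := by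
    simpa [div_eq_mul_inv] using this
  simp at this
  linarith [this]

end aux

set_option maxHeartbeats 1000000 in
theorem stmt_4 (p : ℕ) (K : ℝ) (hK : 0 < K)
    (L : EuclideanSpace ℝ (Fin p) → ℝ)
    (hconv : ConvexOn ℝ Set.univ L)
    (hdiff : Differentiable ℝ L)
    (hlip : ∀ u v : EuclideanSpace ℝ (Fin p),
      ‖gradient L u - gradient L v‖ ≤ K * ‖u - v‖)
    (wstar : EuclideanSpace ℝ (Fin p)) (hstar : gradient L wstar = 0)
    (η : ℝ) (hη0 : 0 < η) (hη : η ≤ 2 / K)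
    (w Δ : EuclideanSpace ℝ (Fin p)) (A : EuclideanSpace ℝ (Fin p))
    (hA : A = Δ - gradient L w) :
    ‖(w - η • Δ) - wstar‖ ^ 2 ≤
      ‖w - wstar‖ ^ 2 - (2 * η - K * η ^ 2) * (L w - L wstar)
        - 2 * η * ⟪w - η • gradient L w - wstar, A⟫ + η ^ 2 * ‖A‖ ^ 2 := by
  set g := gradient L w with hg
  set b := w - wstar with hb
  set f := L w - L wstar with hf
  have hKη : K * η ≤ 2 := by
    rw [div_eq_mul_inv] at hη
    calc K * η ≤ K * (2 * K⁻¹) := by gcongr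
      _ = 2 := by field_simp
  -- f ≥ 0
  have hf0 : 0 ≤ f := by
    have := aux_convex_lb L hconv hdiff wstar w
    rw [hstar] at this
    simp at this
    simp [hf]; linarith
  -- G ≤ 2 K f, where G = ‖g‖²
  have hsq : K / 2 * (1/K * ‖g‖) ^ 2 = 1 / (2*K) * ‖g‖ ^ 2 := by
    have hKne : (K : ℝ) ≠ 0 := ne_of_gt hK
    field_simp
  have hid : 1/K * ‖g‖ ^ 2 = 2 * (1 / (2*K) * ‖g‖ ^ 2) := by
    have hKne : (K : ℝ) ≠ 0 := ne_of_gt hK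
    field_simp
  have hG : ‖g‖ ^ 2 ≤ 2 * K * f := by
    have hdesc := aux_descent K hK L hdiff hlip w (w - (1/K) • g)
    rw [← hg] at hdesc
    have hmin := aux_convex_lb L hconv hdiff wstar (w - (1/K) • g)
    rw [hstar] at hmin
    simp only [inner_zero_left, add_zero] at hmin
    have e1 : (w - (1/K) • g) - w = -((1/K) • g) := by abel
    rw [e1] at hdesc
    rw [inner_neg_right, inner_smul_right, real_inner_self_eq_norm_sq] at hdesc
    rw [norm_neg, norm_smul, Real.norm_eq_abs, abs_of_pos (by positivity : (0:ℝ) < 1/K),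
      hsq] at hdesc
    have h5 : 1 / (2*K) * ‖g‖ ^ 2 ≤ f := by simp only [hf]; linarith [hid]
    calc ‖g‖ ^ 2 = 2 * K * (1 / (2*K) * ‖g‖ ^ 2) := by
          field_simp
      _ ≤ 2 * K * f := by gcongr
  -- cocoercivity: ⟪g, b⟫ ≥ f + ‖g‖²/(2K), in the form 2K⟪g,b⟫ ≥ 2Kf + ‖g‖²
  have hX : 2 * K * f + ‖g‖ ^ 2 ≤ 2 * K * ⟪g, b⟫ := by
    set z := wstar + (1/K) • g with hz
    have h1 : L w - ⟪g, w⟫ ≤ L z - ⟪g, z⟫ := by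
      have := aux_convex_lb L hconv hdiff w z
      rw [inner_sub_right] at this
      linarith
    have h2 : L z ≤ L wstar + 1 / (2*K) * ‖g‖ ^ 2 := by
      have hdesc := aux_descent K hK L hdiff hlip wstar z
      rw [hstar] at hdesc
      have e1 : z - wstar = (1/K) • g := by simp [hz]
      rw [e1] at hdesc
      rw [norm_smul, Real.norm_eq_abs, abs_of_pos (by positivity : (0:ℝ) < 1/K),
        hsq] at hdesc
      simp only [inner_zero_left, add_zero] at hdesc
      linarith
    have h3 : ⟪g, z⟫ = ⟪g, wstar⟫ + 1/K * ‖g‖ ^ 2 := by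
      rw [hz, inner_add_right, inner_smul_right, real_inner_self_eq_norm_sq]
    have h4 : ⟪g, b⟫ = ⟪g, w⟫ - ⟪g, wstar⟫ := by
      rw [hb, inner_sub_right]
    have h6 : f + 1 / (2*K) * ‖g‖ ^ 2 ≤ ⟪g, b⟫ := by
      rw [h4]; simp only [hf]; linarith [h1, h2, h3, hid]
    calc 2 * K * f + ‖g‖ ^ 2 = 2 * K * (f + 1 / (2*K) * ‖g‖ ^ 2) := by
          field_simp
      _ ≤ 2 * K * ⟪g, b⟫ := by gcongr
  -- key: ‖b - η•g‖² ≤ ‖b‖² - (2η - Kη²) f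
  have hkey : ‖b - η • g‖ ^ 2 ≤ ‖b‖ ^ 2 - (2 * η - K * η ^ 2) * f := by
    have hexp : ‖b - η • g‖ ^ 2 = ‖b‖ ^ 2 - 2 * η * ⟪g, b⟫ + η ^ 2 * ‖g‖ ^ 2 := by
      rw [norm_sub_sq_real, norm_smul, Real.norm_eq_abs, abs_of_pos hη0,
        inner_smul_right, real_inner_comm]
      ring
    rw [hexp]
    have hx' : 2 * K * η * f + η * ‖g‖ ^ 2 ≤ 2 * K * η * ⟪g, b⟫ := by
      nlinarith [mul_le_mul_of_nonneg_left hX hη0.le]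
    have hrem : 0 ≤ η * ‖g‖ ^ 2 - K * η ^ 2 * ‖g‖ ^ 2 + K ^ 2 * η ^ 2 * f := by
      rcases le_or_gt (K * η) 1 with h | h
      · nlinarith [mul_nonneg (mul_nonneg hη0.le (sq_nonneg ‖g‖)) (sub_nonneg.2 h),
          mul_nonneg (mul_nonneg (mul_nonneg hK.le hK.le)
            (mul_nonneg hη0.le hη0.le)) hf0]
      · have h1' : (K * η - 1) * ‖g‖ ^ 2 ≤ (K * η - 1) * (2 * K * f) :=
          mul_le_mul_of_nonneg_left hG (by linarith)
        have h2' : (K * η - 1) * (2 * K * f) ≤ K * η * (K * f) := by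
          nlinarith [mul_nonneg (sub_nonneg.2 hKη) (mul_nonneg hK.le hf0)]
        nlinarith [mul_le_mul_of_nonneg_left (h1'.trans h2') hη0.le]
    have hKexpr : 0 ≤ K * (‖b‖ ^ 2 - (2 * η - K * η ^ 2) * f
        - (‖b‖ ^ 2 - 2 * η * ⟪g, b⟫ + η ^ 2 * ‖g‖ ^ 2)) := by nlinarith [hrem, hx']
    nlinarith [hKexpr, hK]
  -- decomposition
  have hdec : (w - η • Δ) - wstar = (b - η • g) - η • A := by
    rw [hA, hb, hg]
    rw [smul_sub]
    abel
  have hexp2 : ‖(b - η • g) - η • A‖ ^ 2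
      = ‖b - η • g‖ ^ 2 - 2 * η * ⟪b - η • g, A⟫ + η ^ 2 * ‖A‖ ^ 2 := by
    rw [norm_sub_sq_real, norm_smul, Real.norm_eq_abs, abs_of_pos hη0, inner_smul_right]
    ring
  have hinner : (w - η • gradient L w - wstar : EuclideanSpace ℝ (Fin p)) = b - η • g := by
    rw [hb, hg]; abel
  rw [hdec, hexp2, hinner]
  linarith [hkey]
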